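/- Let d be an even positive integer, let m, n be integers, and let θ : {0, ..., d/2 − 1} → ℝ be a family of rotational frequencies. Represent a query vector q ∈ ℝ^d and a key vector k ∈ ℝ^d by their complex 2D subvectors q_0, ..., q_{d/2−1} ∈ ℂ and k_0, ..., k_{d/2−1} ∈ ℂ (where q_i = q_{[2i:2i+1]} is the complex number formed from the 2i-th and (2i+1)-th real coordinates, and similarly for k). The Rotary Position Embedding at position m acts on the i-th subvector by multiplication by e^{i m θ_i}. Then the real inner product of the rotated vectors satisfies (R_m q)^⊤ (R_n k) = Re[ Σ_{i=0}^{d/2−1} (e^{i m θ_i} q_i) · conj(e^{i n θ_i} k_i) ] = Re[ Σ_{i=0}^{d/2−1} q_i · conj(k_i) · e^{i(m−n)θ_i} ]; in particular, the inner product depends on the positions m and n only through their difference m − n. -/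
import Mathlib


/-- Rotary Position Embedding (RoPE) at position `m` with frequencies `θ`:
each consecutive coordinate pair `(2i, 2i+1)` of the real vector `v` is
rotated by the angle `m · θ i`. -/
noncomputable def ropeRotate (θ : ℕ → ℝ) (m : ℤ) (v : ℕ → ℝ) : ℕ → ℝ := fun j =>
  if j % 2 = 0 then
    Real.cos ((m : ℝ) * θ (j / 2)) * v j - Real.sin ((m : ℝ) * θ (j / 2)) * v (j + 1)
  else
    Real.sin ((m : ℝ) * θ (j / 2)) * v (j - 1) + Real.cos ((m : ℝ) * θ (j / 2)) * v j

/-- The `i`-th complex 2D subvector `v_{[2i:2i+1]}` of a real vector `v`: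
the complex number whose real part is coordinate `2i` and whose imaginary
part is coordinate `2i+1`. -/
def subvec (v : ℕ → ℝ) (i : ℕ) : ℂ := ⟨v (2 * i), v (2 * i + 1)⟩

lemma sum_range_two_mul' {M : Type*} [AddCommMonoid M] (c : ℕ) (f : ℕ → M) :
    ∑ j ∈ Finset.range (2 * c), f j
      = ∑ i ∈ Finset.range c, (f (2 * i) + f (2 * i + 1)) := by
  induction c with
  | zero => simp
  | succ c ih =>
      rw [Nat.mul_succ, Finset.sum_range_succ, Finset.sum_range_succ,
        Finset.sum_range_succ, ih]
      rw [add_assoc]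

lemma conj_exp_mul (a b : ℝ) (z w : ℂ) :
    (Complex.exp (a * Complex.I) * z) * (starRingEnd ℂ) (Complex.exp (b * Complex.I) * w)
      = z * (starRingEnd ℂ) w * Complex.exp ((a - b : ℝ) * Complex.I) := by
  rw [map_mul, ← Complex.exp_conj, map_mul, Complex.conj_I, Complex.conj_ofReal,
    mul_mul_mul_comm, ← Complex.exp_add, mul_comm]
  congr 1
  push_cast
  ring

/-- **RoPE-induced inner product is a relative position encoding.**
For `d` even and positive, query and key vectors `q k ∈ ℝ^d`, and rotational
frequencies `θ`, the real inner product of the rotated vectors satisfies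
`(R_m q)ᵀ (R_n k) = Re[ ∑_{i<d/2} (e^{i m θ_i} q_i) · conj (e^{i n θ_i} k_i) ]
  = Re[ ∑_{i<d/2} q_i · conj (k_i) · e^{i (m−n) θ_i} ]`,
and in particular it depends on `m` and `n` only through `m − n`. -/
theorem rope_inner_product_relative
    (d : ℕ) (hd : Even d) (hdpos : 0 < d)
    (m n : ℤ) (θ : ℕ → ℝ) (q k : ℕ → ℝ) :
    ((∑ j ∈ Finset.range d, ropeRotate θ m q j * ropeRotate θ n k j)
      = (∑ i ∈ Finset.range (d / 2),
          (Complex.exp ((m : ℂ) * (θ i : ℂ) * Complex.I) * subvec q i) *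
            (starRingEnd ℂ)
              (Complex.exp ((n : ℂ) * (θ i : ℂ) * Complex.I) * subvec k i)).re)
    ∧ ((∑ j ∈ Finset.range d, ropeRotate θ m q j * ropeRotate θ n k j)
      = (∑ i ∈ Finset.range (d / 2),
          subvec q i * (starRingEnd ℂ) (subvec k i) *
            Complex.exp (((m - n : ℤ) : ℂ) * (θ i : ℂ) * Complex.I)).re)
    ∧ (∀ m' n' : ℤ, m - n = m' - n' →
        (∑ j ∈ Finset.range d, ropeRotate θ m q j * ropeRotate θ n k j)
          = ∑ j ∈ Finset.range d, ropeRotate θ m' q j * ropeRotate θ n' k j) := by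
  obtain ⟨c, hc⟩ := hd
  have hd2 : d = 2 * c := by omega
  subst hd2
  have hdiv : (2 * c) / 2 = c := by omega
  -- first equality
  have key : ∀ (μ ν : ℤ),
      (∑ j ∈ Finset.range (2 * c), ropeRotate θ μ q j * ropeRotate θ ν k j)
        = (∑ i ∈ Finset.range c,
            (Complex.exp ((μ : ℂ) * (θ i : ℂ) * Complex.I) * subvec q i) *
              (starRingEnd ℂ)
                (Complex.exp ((ν : ℂ) * (θ i : ℂ) * Complex.I) * subvec k i)).re := by
    intro μ ν
    rw [sum_range_two_mul', Complex.re_sum]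
    refine Finset.sum_congr rfl fun i _ => ?_
    have h0 : (2 * i) % 2 = 0 := by omega
    have h1 : (2 * i + 1) % 2 = 1 := by omega
    have h2 : (2 * i) / 2 = i := by omega
    have h3 : (2 * i + 1) / 2 = i := by omega
    have h4 : (2 * i + 1) - 1 = 2 * i := by omega
    have hexp : ∀ (μ : ℤ), Complex.exp ((μ : ℂ) * (θ i : ℂ) * Complex.I)
        = ⟨Real.cos ((μ : ℝ) * θ i), Real.sin ((μ : ℝ) * θ i)⟩ := by
      intro μ
      have : ((μ : ℂ) * (θ i : ℂ)) = (((μ : ℝ) * θ i : ℝ) : ℂ) := by push_cast; ring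
      rw [this]
      apply Complex.ext <;> simp [Complex.exp_re, Complex.exp_im]
    simp only [ropeRotate, h0, h1, h2, h3, h4]
    norm_num [hexp, subvec, Complex.mul_re, Complex.conj_re, Complex.conj_im,
      Complex.mul_im]
    ring
  have key2 :
      (∑ j ∈ Finset.range (2 * c), ropeRotate θ m q j * ropeRotate θ n k j)
        = (∑ i ∈ Finset.range c,
            subvec q i * (starRingEnd ℂ) (subvec k i) *
              Complex.exp (((m - n : ℤ) : ℂ) * (θ i : ℂ) * Complex.I)).re := by
    rw [key m n]
    congr 1
    refine Finset.sum_congr rfl fun i _ => ?_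
    have hm : (m : ℂ) * (θ i : ℂ) = (((m : ℝ) * θ i : ℝ) : ℂ) := by push_cast; ring
    have hn : (n : ℂ) * (θ i : ℂ) = (((n : ℝ) * θ i : ℝ) : ℂ) := by push_cast; ring
    have hmn : ((m - n : ℤ) : ℂ) * (θ i : ℂ)
        = ((((m : ℝ) * θ i - (n : ℝ) * θ i) : ℝ) : ℂ) := by push_cast; ring
    rw [hm, hn, hmn, conj_exp_mul]
  refine ⟨by rw [hdiv]; exact key m n, by rw [hdiv]; exact key2, ?_⟩
  intro m' n' h
  have key2' :
      (∑ j ∈ Finset.range (2 * c), ropeRotate θ m' q j * ropeRotate θ n' k j)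
        = (∑ i ∈ Finset.range c,
            subvec q i * (starRingEnd ℂ) (subvec k i) *
              Complex.exp (((m' - n' : ℤ) : ℂ) * (θ i : ℂ) * Complex.I)).re := by
    rw [key m' n']
    congr 1
    refine Finset.sum_congr rfl fun i _ => ?_
    have hm : (m' : ℂ) * (θ i : ℂ) = (((m' : ℝ) * θ i : ℝ) : ℂ) := by push_cast; ring
    have hn : (n' : ℂ) * (θ i : ℂ) = (((n' : ℝ) * θ i : ℝ) : ℂ) := by push_cast; ring
    have hmn : ((m' - n' : ℤ) : ℂ) * (θ i : ℂ)
        = ((((m' : ℝ) * θ i - (n' : ℝ) * θ i) : ℝ) : ℂ) := by push_cast; ring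
    rw [hm, hn, hmn, conj_exp_mul]
  rw [key2, key2', h]
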